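/- Let U be an open subset of the unit disc 𝔻 = {z ∈ ℂ : Complex.abs z < 1} and let f : ℂ → ℂ be holomorphic on U with f z ≠ 0 for every z ∈ U. Define Ψ : z ↦ -Real.log (Complex.abs (f z) * (1 - (Complex.abs z)^2)). Then for every z ∈ U one has ΔΨ(z) = D²Ψ(z)(1,1) + D²Ψ(z)(I,I) = 4 / (1 - (Complex.abs z)^2)^2; in particular ΔΨ(z) > 0, so Ψ is strictly subharmonic (strictly plurisubharmonic, i.e. strictly convex with respect to the complex structure) on U. -/

import Mathlib

open Complex ContinuousLinearMap

/-- The real bilinear form `(u, w) ↦ u.re * w.re + u.im * w.im` on `ℂ`. -/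
noncomputable def NNre : ℂ →L[ℝ] ℂ →L[ℝ] ℝ :=
  Complex.reCLM.smulRight Complex.reCLM + Complex.imCLM.smulRight Complex.imCLM

@[simp] lemma NNre_apply (u w : ℂ) : NNre u w = u.re * w.re + u.im * w.im := by
  simp [NNre, smul_eq_mul]

/-- The real bilinear form `(u, w) ↦ (u * w).re` on `ℂ`. -/
noncomputable def QQre : ℂ →L[ℝ] ℂ →L[ℝ] ℝ :=
  (ContinuousLinearMap.compL ℝ ℂ ℂ ℝ Complex.reCLM).comp (ContinuousLinearMap.mul ℝ ℂ)

@[simp] lemma QQre_apply (u w : ℂ) : QQre u w = (u * w).re := rfl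

lemma hasFDerivAt_normSq' (z : ℂ) :
    HasFDerivAt Complex.normSq ((2 : ℝ) • NNre z) z := by
  have hfun : ⇑Complex.normSq = fun z : ℂ => z.re * z.re + z.im * z.im :=
    funext Complex.normSq_apply
  have hre : HasFDerivAt (fun z : ℂ => z.re) Complex.reCLM z := Complex.reCLM.hasFDerivAt
  have him : HasFDerivAt (fun z : ℂ => z.im) Complex.imCLM z := Complex.imCLM.hasFDerivAt
  have h := (hre.mul hre).add (him.mul him)
  rw [hfun]
  refine h.congr_fderiv ?_
  ext w
  simp [smul_eq_mul]
  ring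

/-- First derivative of `z ↦ -log (1 - |z|²)`. -/
noncomputable def DphiP (z : ℂ) : ℂ →L[ℝ] ℝ := (2 / (1 - Complex.normSq z)) • NNre z

lemma hasFDerivAt_philog {z : ℂ} (hz : Complex.normSq z < 1) :
    HasFDerivAt (fun z : ℂ => -Real.log (1 - Complex.normSq z)) (DphiP z) z := by
  have h0 : (1 : ℝ) - Complex.normSq z ≠ 0 := by linarith
  have h1 : HasDerivAt (fun t : ℝ => 1 - t) (-1) (Complex.normSq z) :=
    (hasDerivAt_id _).const_sub 1
  have h2 : HasDerivAt (fun t : ℝ => Real.log (1 - t))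
      ((1 - Complex.normSq z)⁻¹ * (-1)) (Complex.normSq z) :=
    (Real.hasDerivAt_log h0).comp _ h1
  have h3 : HasDerivAt (fun t : ℝ => -Real.log (1 - t))
      ((1 - Complex.normSq z)⁻¹) (Complex.normSq z) := by
    have := h2.neg; refine this.congr_deriv ?_; ring
  have h4 := h3.comp_hasFDerivAt z (hasFDerivAt_normSq' z)
  refine h4.congr_fderiv ?_
  rw [DphiP, smul_smul]
  congr 1
  field_simp

lemma hasFDerivAt_DphiP {z : ℂ} (hz : Complex.normSq z < 1) :
    HasFDerivAt DphiP
      ((2 / (1 - Complex.normSq z)) • NNre +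
        ((2 / (1 - Complex.normSq z) ^ 2) • ((2 : ℝ) • NNre z)).smulRight (NNre z)) z := by
  have h0 : (1 : ℝ) - Complex.normSq z ≠ 0 := by linarith
  have h1 : HasDerivAt (fun t : ℝ => 1 - t) (-1) (Complex.normSq z) :=
    (hasDerivAt_id _).const_sub 1
  have h2 := (h1.inv h0).const_mul (2 : ℝ)
  have h3 : HasDerivAt (fun t : ℝ => 2 / (1 - t))
      (2 / (1 - Complex.normSq z) ^ 2) (Complex.normSq z) := by
    have heq : (fun t : ℝ => 2 / (1 - t)) = fun t : ℝ => 2 * (1 - t)⁻¹ := by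
      funext t; rw [div_eq_mul_inv]
    rw [heq]
    refine h2.congr_deriv ?_
    field_simp
  have hc : HasFDerivAt (fun z : ℂ => 2 / (1 - Complex.normSq z))
      ((2 / (1 - Complex.normSq z) ^ 2) • ((2 : ℝ) • NNre z)) z :=
    h3.comp_hasFDerivAt z (hasFDerivAt_normSq' z)
  have := hc.smul (NNre.hasFDerivAt (x := z))
  exact this

set_option maxHeartbeats 1000000 in
/-- For `f` holomorphic and nonvanishing on an open subset `U` of the unit
disc, the function `Ψ(z) = -log (|f z| (1 - |z|²))` satisfies
`ΔΨ(z) = 4/(1-|z|²)² > 0` on `U`, i.e. `Ψ` is strictly subharmonic. -/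
theorem neg_log_abs_poincare_strictly_subharmonic
    (U : Set ℂ) (hU : IsOpen U) (hUD : U ⊆ {z : ℂ | ‖z‖ < 1})
    (f : ℂ → ℂ) (hf : DifferentiableOn ℂ f U) (hf0 : ∀ z ∈ U, f z ≠ 0) :
    ∀ z ∈ U,
      (fderiv ℝ (fderiv ℝ (fun z =>
          -Real.log (‖f z‖ * (1 - (‖z‖) ^ 2)))) z 1 1 +
       fderiv ℝ (fderiv ℝ (fun z =>
          -Real.log (‖f z‖ * (1 - (‖z‖) ^ 2)))) z
            Complex.I Complex.I
        = 4 / (1 - (‖z‖) ^ 2) ^ 2) ∧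
      0 < fderiv ℝ (fderiv ℝ (fun z =>
          -Real.log (‖f z‖ * (1 - (‖z‖) ^ 2)))) z 1 1 +
          fderiv ℝ (fderiv ℝ (fun z =>
          -Real.log (‖f z‖ * (1 - (‖z‖) ^ 2)))) z
            Complex.I Complex.I := by
  intro z₀ hz₀
  set F : ℂ → ℝ := fun z => -Real.log (‖f z‖ * (1 - (‖z‖) ^ 2)) with hF
  set c : ℂ := f z₀ with hc
  have hc0 : c ≠ 0 := hf0 z₀ hz₀
  -- the open set W
  set W : Set ℂ := U ∩ f ⁻¹' ((· / c) ⁻¹' Complex.slitPlane) with hW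
  have hWopen : IsOpen W :=
    hf.continuousOn.isOpen_inter_preimage hU
      (Complex.isOpen_slitPlane.preimage (continuous_id.div_const c))
  have hz₀W : z₀ ∈ W := by
    refine ⟨hz₀, ?_⟩
    simp only [Set.mem_preimage, ← hc, div_self hc0]
    exact Complex.one_mem_slitPlane
  have hWU : W ⊆ U := Set.inter_subset_left
  -- the holomorphic logarithm
  set g : ℂ → ℂ := fun z => Complex.log (f z / c) with hg
  have hgdiff : ∀ z ∈ W, DifferentiableAt ℂ g z := by
    intro z hz
    exact ((hf.differentiableAt (hU.mem_nhds hz.1)).div_const c).clog hz.2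
  have hgdOn : DifferentiableOn ℂ g W := fun z hz => (hgdiff z hz).differentiableWithinAt
  have hgan : AnalyticOnNhd ℂ g W := hgdOn.analyticOnNhd hWopen
  have hg'an : AnalyticOnNhd ℂ (deriv g) W := hgan.deriv
  -- normSq facts
  have hnormSq : ∀ z ∈ U, Complex.normSq z < 1 := by
    intro z hz
    have := hUD hz
    simp only [Set.mem_setOf_eq] at this
    rw [← Complex.sq_norm]
    nlinarith [norm_nonneg z]
  -- local expression of F as a sum
  set S : ℂ → ℝ := fun z =>
    (-(g z).re) + (-Real.log (1 - Complex.normSq z)) + (-Real.log (‖c‖)) with hS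
  have hFS : ∀ z ∈ W, F z = S z := by
    intro z hz
    have hfz : f z ≠ 0 := hf0 z hz.1
    have habs : (0 : ℝ) < ‖f z‖ := norm_pos_iff.mpr hfz
    have hzd : ‖z‖ < 1 := hUD hz.1
    have h1 : (0 : ℝ) < 1 - ‖z‖ ^ 2 := by nlinarith [norm_nonneg z]
    have hdiv : f z / c ≠ 0 := div_ne_zero hfz hc0
    have hre : (g z).re = Real.log (‖f z / c‖) := Complex.log_re _
    have habsdiv : ‖f z / c‖ = ‖f z‖ / ‖c‖ := norm_div _ _
    have hlogf : Real.log (‖f z‖) =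
        (g z).re + Real.log (‖c‖) := by
      rw [hre, habsdiv, Real.log_div (ne_of_gt habs) (norm_ne_zero_iff.mpr hc0)]
      ring
    have : F z = -(Real.log (‖f z‖) + Real.log (1 - ‖z‖ ^ 2)) := by
      rw [hF]
      simp only
      rw [Real.log_mul (ne_of_gt habs) (ne_of_gt h1)]
    rw [this, hlogf, hS]
    simp only
    rw [← Complex.sq_norm]
    ring
  -- the first derivative of F on W
  set A : ℂ → (ℂ →L[ℝ] ℝ) := fun z => DphiP z - QQre (deriv g z) with hA
  have hFderiv : ∀ z ∈ W, HasFDerivAt F (A z) z := by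
    intro z hz
    have hgz : HasDerivAt g (deriv g z) z := (hgdiff z hz).hasDerivAt
    have hre : HasFDerivAt (fun z => (g z).re) (QQre (deriv g z)) z := by
      have h := Complex.reCLM.hasFDerivAt.comp z (hgz.hasFDerivAt.restrictScalars ℝ)
      refine h.congr_fderiv ?_
      ext w
      simp [mul_comm]
    have hphi := hasFDerivAt_philog (hnormSq z hz.1)
    have hSd : HasFDerivAt S (A z) z := by
      have := (hre.neg.add hphi).add_const (-Real.log (‖c‖))
      refine this.congr_fderiv ?_
      rw [hA]
      simp only
      abel
    refine hSd.congr_of_eventuallyEq ?_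
    filter_upwards [hWopen.mem_nhds hz] with w hw
    exact hFS w hw
  -- fderiv F = A near z₀
  have hfdF : fderiv ℝ F =ᶠ[nhds z₀] A := by
    filter_upwards [hWopen.mem_nhds hz₀W] with z hz
    exact (hFderiv z hz).fderiv
  -- second derivative
  set s : ℝ := Complex.normSq z₀ with hs
  set g2 : ℂ := deriv (deriv g) z₀ with hg2
  have hdg : HasDerivAt (deriv g) g2 z₀ := (hg'an z₀ hz₀W).differentiableAt.hasDerivAt
  have hQg : HasFDerivAt (fun z => QQre (deriv g z))
      (QQre.comp (((1 : ℂ →L[ℂ] ℂ).smulRight g2).restrictScalars ℝ)) z₀ :=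
    QQre.hasFDerivAt.comp z₀ (hdg.hasFDerivAt.restrictScalars ℝ)
  have hAd : HasFDerivAt A
      (((2 / (1 - s)) • NNre +
          ((2 / (1 - s) ^ 2) • ((2 : ℝ) • NNre z₀)).smulRight (NNre z₀)) -
        QQre.comp (((1 : ℂ →L[ℂ] ℂ).smulRight g2).restrictScalars ℝ)) z₀ :=
    (hasFDerivAt_DphiP (hnormSq z₀ hz₀)).sub hQg
  have h2nd : fderiv ℝ (fderiv ℝ F) z₀ =
      ((2 / (1 - s)) • NNre +
          ((2 / (1 - s) ^ 2) • ((2 : ℝ) • NNre z₀)).smulRight (NNre z₀)) -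
        QQre.comp (((1 : ℂ →L[ℂ] ℂ).smulRight g2).restrictScalars ℝ) := by
    rw [hfdF.fderiv_eq]
    exact hAd.fderiv
  have hs1 : s < 1 := hnormSq z₀ hz₀
  have hs0 : (1 : ℝ) - s ≠ 0 := by linarith
  have habs2 : (‖z₀‖) ^ 2 = s := Complex.sq_norm z₀
  have key : fderiv ℝ (fderiv ℝ F) z₀ 1 1 + fderiv ℝ (fderiv ℝ F) z₀ Complex.I Complex.I
      = 4 / (1 - s) ^ 2 := by
    rw [h2nd]
    simp only [ContinuousLinearMap.sub_apply, ContinuousLinearMap.add_apply,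
      ContinuousLinearMap.smul_apply, ContinuousLinearMap.smulRight_apply,
      ContinuousLinearMap.comp_apply, ContinuousLinearMap.coe_restrictScalars',
      ContinuousLinearMap.one_apply, NNre_apply, QQre_apply, smul_eq_mul,
      Complex.one_re, Complex.one_im, Complex.I_re, Complex.I_im, Complex.mul_re,
      Complex.mul_im, Complex.smul_re, Complex.smul_im]
    have hnormsq : z₀.re * z₀.re + z₀.im * z₀.im = s := (Complex.normSq_apply z₀).symm
    field_simp
    linear_combination 4 * hnormsq
  constructor
  · rw [habs2]
    exact key
  · rw [key]
    positivity
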